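/- Let r ≥ 12 be an integer and S_r the numerical semigroup generated by {r, ..., 2r−7, 2r−4, 2r−3}. Let D = {2r, 2r−1, 2r−4, 2r−5} ∪ {2, 3, ..., r}. Then 3r is the least natural number l such that l − a ∈ S_r for all a ∈ D. -/

import Mathlib

/-- For r ≥ 12 and S_r = ⟨r, ..., 2r−7, 2r−4, 2r−3⟩, with
D = {2r, 2r−1, 2r−4, 2r−5} ∪ {2, ..., r}, the least natural number l such that
l − a ∈ S_r for every a ∈ D is 3r. -/
theorem stmt5 (r : ℕ) (hr : 12 ≤ r) (S : AddSubmonoid ℕ)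
    (hS : S = AddSubmonoid.closure
      ((Set.Icc r (2 * r - 7) ∪ {2 * r - 4, 2 * r - 3}) : Set ℕ))
    (D : Set ℕ)
    (hD : D = ({2 * r, 2 * r - 1, 2 * r - 4, 2 * r - 5} : Set ℕ) ∪ Set.Icc 2 r) :
    IsLeast {l : ℕ | ∀ a ∈ D, ∃ m ∈ S, l = a + m} (3 * r) := by
  subst hS hD
  have hgen : ∀ x, r ≤ x → x ≤ 2 * r - 7 →
      x ∈ AddSubmonoid.closure ((Set.Icc r (2 * r - 7) ∪ {2 * r - 4, 2 * r - 3}) : Set ℕ) := by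
    intro x h1 h2
    exact AddSubmonoid.subset_closure (Or.inl ⟨h1, h2⟩)
  have h4 : (2 * r - 4) ∈ AddSubmonoid.closure
      ((Set.Icc r (2 * r - 7) ∪ {2 * r - 4, 2 * r - 3}) : Set ℕ) :=
    AddSubmonoid.subset_closure (Or.inr (Or.inl rfl))
  have h3 : (2 * r - 3) ∈ AddSubmonoid.closure
      ((Set.Icc r (2 * r - 7) ∪ {2 * r - 4, 2 * r - 3}) : Set ℕ) :=
    AddSubmonoid.subset_closure (Or.inr (Or.inr rfl))
  constructor
  · intro a ha
    simp only [Set.mem_union, Set.mem_insert_iff, Set.mem_singleton_iff, Set.mem_Icc] at ha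
    rcases ha with (rfl | rfl | rfl | rfl) | ⟨ha2, har⟩
    · exact ⟨r, hgen r le_rfl (by omega), by omega⟩
    · exact ⟨r + 1, hgen (r + 1) (by omega) (by omega), by omega⟩
    · exact ⟨r + 4, hgen (r + 4) (by omega) (by omega), by omega⟩
    · exact ⟨r + 5, hgen (r + 5) (by omega) (by omega), by omega⟩
    · by_cases h7 : 7 ≤ a
      · exact ⟨r + (2 * r - a), add_mem (hgen r le_rfl (by omega))
          (hgen (2 * r - a) (by omega) (by omega)), by omega⟩
      · interval_cases a
        · exact ⟨(r + 1) + (2 * r - 3), add_mem (hgen (r + 1) (by omega) (by omega)) h3, by omega⟩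
        · exact ⟨r + (2 * r - 3), add_mem (hgen r le_rfl (by omega)) h3, by omega⟩
        · exact ⟨r + (2 * r - 4), add_mem (hgen r le_rfl (by omega)) h4, by omega⟩
        · exact ⟨(r + 2) + (2 * r - 7), add_mem (hgen (r + 2) (by omega) (by omega))
            (hgen (2 * r - 7) (by omega) le_rfl), by omega⟩
        · exact ⟨(r + 1) + (2 * r - 7), add_mem (hgen (r + 1) (by omega) (by omega))
            (hgen (2 * r - 7) (by omega) le_rfl), by omega⟩
  · intro l hl
    have hA : ∀ x ∈ AddSubmonoid.closure
        ((Set.Icc r (2 * r - 7) ∪ {2 * r - 4, 2 * r - 3}) : Set ℕ), x = 0 ∨ r ≤ x := by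
      intro x hx
      induction hx using AddSubmonoid.closure_induction with
      | mem y hy =>
        rcases hy with ⟨h1, _⟩ | (rfl | rfl) <;> omega
      | zero => left; rfl
      | add a b _ _ ha hb => omega
    obtain ⟨m, hm, heq⟩ := hl (2 * r) (Or.inl (Or.inl rfl))
    obtain ⟨m', hm', heq'⟩ := hl (2 * r - 1) (Or.inl (Or.inr (Or.inl rfl)))
    have h1 := hA m hm
    have h2 := hA m' hm'
    omega
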